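/- Let 𝔤₁ and 𝔤₂ be non-abelian stratified real Lie algebras of step 2. Then the Métivier order of the product is the minimum of the Métivier orders: order(𝔤₁ × 𝔤₂) = min{order(𝔤₁), order(𝔤₂)}, where the product carries the product stratification with first stratum V₁(𝔤₁) × V₁(𝔤₂) and second stratum V₂(𝔤₁) × V₂(𝔤₂). -/

import Mathlib

/-- The submodule of a Lie algebra spanned by brackets of elements of two submodules. -/
def bracketSpan {L : Type*} [LieRing L] [LieAlgebra ℝ L] (A B : Submodule ℝ L) :
    Submodule ℝ L :=
  Submodule.span ℝ {z | ∃ x ∈ A, ∃ y ∈ B, ⁅x, y⁆ = z}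

/-- The commutator submodule `[𝔤, 𝔤]` of a Lie algebra. -/
def commutatorSubmodule (L : Type*) [LieRing L] [LieAlgebra ℝ L] : Submodule ℝ L :=
  bracketSpan (⊤ : Submodule ℝ L) ⊤

/-- A family `V` of submodules of a real Lie algebra `L` is a stratification of step `s` if
`L = V 1 ⊕ ⋯ ⊕ V s`, `[V 1, V (i-1)] = V i` for `2 ≤ i ≤ s`, `V s ≠ 0` and `[V 1, V s] = 0`.
We also require `V i = 0` for `i = 0` and `i > s`. -/
structure IsStratification (L : Type*) [LieRing L] [LieAlgebra ℝ L]
    (V : ℕ → Submodule ℝ L) (s : ℕ) : Prop where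
  one_le_step : 1 ≤ s
  isInternal : DirectSum.IsInternal (fun i : Fin s => V (i.1 + 1))
  bracket_eq : ∀ i, 2 ≤ i → i ≤ s → bracketSpan (V 1) (V (i - 1)) = V i
  last_ne_bot : V s ≠ ⊥
  bracket_last_eq_bot : bracketSpan (V 1) (V s) = ⊥
  zero_eq_bot : V 0 = ⊥
  eq_bot_of_gt : ∀ i, s < i → V i = ⊥

/-- A stratified real Lie algebra with strata `V` and rank `m = dim (V 1)` is hypergenerated of
order `k` if every subspace `P ⊆ V 1` with `dim P = m - k` satisfies `[𝔤,𝔤] ⊆ Lie(P)`. -/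
def IsHypergenerated (L : Type*) [LieRing L] [LieAlgebra ℝ L]
    (V : ℕ → Submodule ℝ L) (k : ℕ) : Prop :=
  ∀ P : Submodule ℝ L, P ≤ V 1 →
    Module.finrank ℝ P = Module.finrank ℝ (V 1) - k →
    commutatorSubmodule L ≤ (LieSubalgebra.lieSpan ℝ L (P : Set L)).toSubmodule

/-- The Lie bracket as a bilinear map `V₁ → V₁ → V₂`, given that brackets of elements
of `V₁` lie in `V₂`. -/
noncomputable def bracketBilin {L : Type*} [LieRing L] [LieAlgebra ℝ L]
    (V₁ V₂ : Submodule ℝ L) (h : ∀ v ∈ V₁, ∀ w ∈ V₁, ⁅v, w⁆ ∈ V₂) :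
    V₁ →ₗ[ℝ] V₁ →ₗ[ℝ] V₂ :=
  LinearMap.mk₂ ℝ (fun v w => ⟨⁅(v : L), (w : L)⁆, h v v.2 w w.2⟩)
    (fun x y z => Subtype.ext (by simp [add_lie]))
    (fun c x y => Subtype.ext (by simp))
    (fun x y z => Subtype.ext (by simp [lie_add]))
    (fun c x y => Subtype.ext (by simp))

/-- The Kaplan operator: to a functional `μ` on `V₂` it associates the alternating
bilinear form `(v, w) ↦ μ ⁅v, w⁆` on `V₁`. -/
noncomputable def kaplan {L : Type*} [LieRing L] [LieAlgebra ℝ L]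
    (V₁ V₂ : Submodule ℝ L) (h : ∀ v ∈ V₁, ∀ w ∈ V₁, ⁅v, w⁆ ∈ V₂)
    (μ : Module.Dual ℝ V₂) : LinearMap.BilinForm ℝ V₁ :=
  (bracketBilin V₁ V₂ h).compr₂ μ

/-- The rank of a bilinear form: `dim V - dim ker ω`. -/
noncomputable def formRank {V : Type*} [AddCommGroup V] [Module ℝ V]
    (ω : LinearMap.BilinForm ℝ V) : ℕ :=
  Module.finrank ℝ V - Module.finrank ℝ (LinearMap.ker ω)

/-- The Métivier order of a step-2 stratified Lie algebra: the minimum of the ranks of the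
Kaplan forms `J_μ` over nonzero functionals `μ` on `V₂`. -/
noncomputable def metivierOrder {L : Type*} [LieRing L] [LieAlgebra ℝ L]
    (V₁ V₂ : Submodule ℝ L) (h : ∀ v ∈ V₁, ∀ w ∈ V₁, ⁅v, w⁆ ∈ V₂) : ℕ :=
  sInf {r : ℕ | ∃ μ : Module.Dual ℝ V₂, μ ≠ 0 ∧ r = formRank (kaplan V₁ V₂ h μ)}

theorem IsStratification.lie_mem_sq {L : Type*} [LieRing L] [LieAlgebra ℝ L]
    {V : ℕ → Submodule ℝ L} {s : ℕ} (hst : IsStratification L V s) (hs : 2 ≤ s) :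
    ∀ v ∈ V 1, ∀ w ∈ V 1, ⁅v, w⁆ ∈ V 2 := by
  intro v hv w hw
  have h2 : bracketSpan (V 1) (V 1) = V 2 := hst.bracket_eq 2 le_rfl hs
  rw [← h2]
  exact Submodule.subset_span ⟨v, hv, w, hw, rfl⟩

/-- The product of two Lie rings, with componentwise bracket. -/
instance prodLieRing (L₁ L₂ : Type*) [LieRing L₁] [LieRing L₂] : LieRing (L₁ × L₂) where
  bracket x y := (⁅x.1, y.1⁆, ⁅x.2, y.2⁆)
  add_lie x y z := Prod.ext (add_lie x.1 y.1 z.1) (add_lie x.2 y.2 z.2)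
  lie_add x y z := Prod.ext (lie_add x.1 y.1 z.1) (lie_add x.2 y.2 z.2)
  lie_self x := Prod.ext (lie_self x.1) (lie_self x.2)
  leibniz_lie x y z := Prod.ext (leibniz_lie x.1 y.1 z.1) (leibniz_lie x.2 y.2 z.2)

/-- The product of two real Lie algebras. -/
instance prodLieAlgebra (L₁ L₂ : Type*) [LieRing L₁] [LieRing L₂]
    [LieAlgebra ℝ L₁] [LieAlgebra ℝ L₂] : LieAlgebra ℝ (L₁ × L₂) :=
  { (inferInstance : Module ℝ (L₁ × L₂)) with
    lie_smul := fun c x y => Prod.ext (lie_smul c x.1 y.1) (lie_smul c x.2 y.2) }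

@[simp] theorem prod_lie_fst {L₁ L₂ : Type*} [LieRing L₁] [LieRing L₂] (x y : L₁ × L₂) :
    (⁅x, y⁆ : L₁ × L₂).1 = ⁅x.1, y.1⁆ := rfl

@[simp] theorem prod_lie_snd {L₁ L₂ : Type*} [LieRing L₁] [LieRing L₂] (x y : L₁ × L₂) :
    (⁅x, y⁆ : L₁ × L₂).2 = ⁅x.2, y.2⁆ := rfl

/-- Brackets of elements of `V₁(𝔤₁) × V₁(𝔤₂)` lie in `V₂(𝔤₁) × V₂(𝔤₂)`: the closure
property needed to form the Kaplan operator of the product stratification. -/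
theorem prod_lie_mem_sq {L₁ L₂ : Type*} [LieRing L₁] [LieAlgebra ℝ L₁]
    [LieRing L₂] [LieAlgebra ℝ L₂] {V : ℕ → Submodule ℝ L₁} {W : ℕ → Submodule ℝ L₂}
    (hV : IsStratification L₁ V 2) (hW : IsStratification L₂ W 2) :
    ∀ v ∈ (V 1).prod (W 1), ∀ w ∈ (V 1).prod (W 1), ⁅v, w⁆ ∈ (V 2).prod (W 2) := by
  intro v hv w hw
  rw [Submodule.mem_prod] at hv hw ⊢
  exact ⟨hV.lie_mem_sq le_rfl _ hv.1 _ hw.1, hW.lie_mem_sq le_rfl _ hv.2 _ hw.2⟩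


section AuxProd

variable {M N : Type*} [AddCommGroup M] [Module ℝ M] [AddCommGroup N] [Module ℝ N]

/-- The equivalence between `p.prod q` and `p × q`. -/
def submoduleProdEquiv (p : Submodule ℝ M) (q : Submodule ℝ N) :
    ↥(p.prod q) ≃ₗ[ℝ] p × q where
  toFun x := (⟨x.1.1, x.2.1⟩, ⟨x.1.2, x.2.2⟩)
  map_add' x y := rfl
  map_smul' c x := rfl
  invFun a := ⟨(a.1.1, a.2.1), ⟨a.1.2, a.2.2⟩⟩
  left_inv x := rfl
  right_inv a := rfl

theorem finrank_submodule_prod [FiniteDimensional ℝ M] [FiniteDimensional ℝ N]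
    (p : Submodule ℝ M) (q : Submodule ℝ N) :
    Module.finrank ℝ ↥(p.prod q) = Module.finrank ℝ p + Module.finrank ℝ q := by
  rw [(submoduleProdEquiv p q).finrank_eq, Module.finrank_prod]

/-- Projection of `p.prod q` onto `p`. -/
def prodProjFst (p : Submodule ℝ M) (q : Submodule ℝ N) : ↥(p.prod q) →ₗ[ℝ] p where
  toFun x := ⟨x.1.1, x.2.1⟩
  map_add' x y := rfl
  map_smul' c x := rfl

/-- Projection of `p.prod q` onto `q`. -/
def prodProjSnd (p : Submodule ℝ M) (q : Submodule ℝ N) : ↥(p.prod q) →ₗ[ℝ] q where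
  toFun x := ⟨x.1.2, x.2.2⟩
  map_add' x y := rfl
  map_smul' c x := rfl

/-- Inclusion of `p` into `p.prod q`. -/
def prodInl (p : Submodule ℝ M) (q : Submodule ℝ N) : p →ₗ[ℝ] ↥(p.prod q) where
  toFun x := ⟨((x : M), 0), ⟨x.2, q.zero_mem⟩⟩
  map_add' x y := Subtype.ext (by simp)
  map_smul' c x := Subtype.ext (by simp)

/-- Inclusion of `q` into `p.prod q`. -/
def prodInr (p : Submodule ℝ M) (q : Submodule ℝ N) : q →ₗ[ℝ] ↥(p.prod q) where
  toFun x := ⟨(0, (x : N)), ⟨p.zero_mem, x.2⟩⟩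
  map_add' x y := Subtype.ext (by simp)
  map_smul' c x := Subtype.ext (by simp)

theorem prod_dual_decomp (p : Submodule ℝ M) (q : Submodule ℝ N)
    (μ : Module.Dual ℝ ↥(p.prod q)) (x : ↥(p.prod q)) :
    μ x = μ.comp (prodInl p q) ⟨x.1.1, x.2.1⟩ + μ.comp (prodInr p q) ⟨x.1.2, x.2.2⟩ := by
  rw [LinearMap.comp_apply, LinearMap.comp_apply, ← map_add]
  congr 1
  apply Subtype.ext
  apply Prod.ext <;> simp [prodInl, prodInr]

end AuxProd

theorem kaplan_zero {L : Type*} [LieRing L] [LieAlgebra ℝ L]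
    (V₁ V₂ : Submodule ℝ L) (h : ∀ v ∈ V₁, ∀ w ∈ V₁, ⁅v, w⁆ ∈ V₂) :
    kaplan V₁ V₂ h (0 : Module.Dual ℝ V₂) = 0 := by
  ext v w
  simp [kaplan]

theorem formRank_zero {Vv : Type*} [AddCommGroup Vv] [Module ℝ Vv] :
    formRank (0 : LinearMap.BilinForm ℝ Vv) = 0 := by
  rw [formRank, LinearMap.ker_zero, finrank_top, Nat.sub_self]

section AuxKaplan

variable {L₁ L₂ : Type*} [LieRing L₁] [LieAlgebra ℝ L₁] [LieRing L₂] [LieAlgebra ℝ L₂]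
  [FiniteDimensional ℝ L₁] [FiniteDimensional ℝ L₂]

theorem kaplan_prod_apply {V₁ V₂ : Submodule ℝ L₁} {W₁ W₂ : Submodule ℝ L₂}
    (h : ∀ v ∈ V₁.prod W₁, ∀ w ∈ V₁.prod W₁, ⁅v, w⁆ ∈ V₂.prod W₂)
    (h₁ : ∀ v ∈ V₁, ∀ w ∈ V₁, ⁅v, w⁆ ∈ V₂)
    (h₂ : ∀ v ∈ W₁, ∀ w ∈ W₁, ⁅v, w⁆ ∈ W₂)
    (μ : Module.Dual ℝ ↥(V₂.prod W₂)) (μ₁ : Module.Dual ℝ V₂) (μ₂ : Module.Dual ℝ W₂)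
    (hμ : ∀ x : ↥(V₂.prod W₂), μ x = μ₁ ⟨x.1.1, x.2.1⟩ + μ₂ ⟨x.1.2, x.2.2⟩)
    (x y : ↥(V₁.prod W₁)) :
    kaplan (V₁.prod W₁) (V₂.prod W₂) h μ x y =
      kaplan V₁ V₂ h₁ μ₁ (prodProjFst V₁ W₁ x) (prodProjFst V₁ W₁ y) +
        kaplan W₁ W₂ h₂ μ₂ (prodProjSnd V₁ W₁ x) (prodProjSnd V₁ W₁ y) := by
  simp only [kaplan, bracketBilin, LinearMap.compr₂_apply, LinearMap.mk₂_apply]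
  exact hμ _

theorem kaplan_prod_ker {V₁ V₂ : Submodule ℝ L₁} {W₁ W₂ : Submodule ℝ L₂}
    (h : ∀ v ∈ V₁.prod W₁, ∀ w ∈ V₁.prod W₁, ⁅v, w⁆ ∈ V₂.prod W₂)
    (h₁ : ∀ v ∈ V₁, ∀ w ∈ V₁, ⁅v, w⁆ ∈ V₂)
    (h₂ : ∀ v ∈ W₁, ∀ w ∈ W₁, ⁅v, w⁆ ∈ W₂)
    (μ : Module.Dual ℝ ↥(V₂.prod W₂)) (μ₁ : Module.Dual ℝ V₂) (μ₂ : Module.Dual ℝ W₂)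
    (hμ : ∀ x : ↥(V₂.prod W₂), μ x = μ₁ ⟨x.1.1, x.2.1⟩ + μ₂ ⟨x.1.2, x.2.2⟩) :
    Submodule.map (submoduleProdEquiv V₁ W₁ : ↥(V₁.prod W₁) →ₗ[ℝ] V₁ × W₁)
        (LinearMap.ker (kaplan (V₁.prod W₁) (V₂.prod W₂) h μ)) =
      (LinearMap.ker (kaplan V₁ V₂ h₁ μ₁)).prod (LinearMap.ker (kaplan W₁ W₂ h₂ μ₂)) := by
  ext x
  rw [Submodule.mem_map_equiv, Submodule.mem_prod]
  simp only [LinearMap.mem_ker]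
  constructor
  · intro hx
    have key : ∀ y : ↥(V₁.prod W₁),
        kaplan V₁ V₂ h₁ μ₁ x.1 (prodProjFst V₁ W₁ y) +
          kaplan W₁ W₂ h₂ μ₂ x.2 (prodProjSnd V₁ W₁ y) = 0 := by
      intro y
      have := congrArg (fun f : Module.Dual ℝ ↥(V₁.prod W₁) => f y) hx
      simp only [LinearMap.zero_apply] at this
      rw [kaplan_prod_apply h h₁ h₂ μ μ₁ μ₂ hμ] at this
      convert this using 3 <;> rfl
    constructor
    · ext y₁
      have hy := key ⟨((y₁ : L₁), 0), ⟨y₁.2, W₁.zero_mem⟩⟩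
      have e1 : prodProjFst V₁ W₁ ⟨((y₁ : L₁), 0), ⟨y₁.2, W₁.zero_mem⟩⟩ = y₁ := rfl
      have e2 : prodProjSnd V₁ W₁ ⟨((y₁ : L₁), 0), ⟨y₁.2, W₁.zero_mem⟩⟩ = 0 := rfl
      rw [e1, e2, map_zero] at hy
      simpa using hy
    · ext y₂
      have hy := key ⟨(0, (y₂ : L₂)), ⟨V₁.zero_mem, y₂.2⟩⟩
      have e1 : prodProjFst V₁ W₁ ⟨(0, (y₂ : L₂)), ⟨V₁.zero_mem, y₂.2⟩⟩ = 0 := rfl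
      have e2 : prodProjSnd V₁ W₁ ⟨(0, (y₂ : L₂)), ⟨V₁.zero_mem, y₂.2⟩⟩ = y₂ := rfl
      rw [e1, e2, map_zero] at hy
      simpa using hy
  · rintro ⟨hx1, hx2⟩
    ext y
    rw [kaplan_prod_apply h h₁ h₂ μ μ₁ μ₂ hμ]
    have e1 : prodProjFst V₁ W₁ ((submoduleProdEquiv V₁ W₁).symm x) = x.1 := rfl
    have e2 : prodProjSnd V₁ W₁ ((submoduleProdEquiv V₁ W₁).symm x) = x.2 := rfl
    rw [e1, e2]
    have t1 := congrArg (fun f : Module.Dual ℝ V₁ => f (prodProjFst V₁ W₁ y)) hx1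
    have t2 := congrArg (fun f : Module.Dual ℝ W₁ => f (prodProjSnd V₁ W₁ y)) hx2
    simp only [LinearMap.zero_apply] at t1 t2
    simp [t1, t2]

theorem kaplan_prod_formRank {V₁ V₂ : Submodule ℝ L₁} {W₁ W₂ : Submodule ℝ L₂}
    (h : ∀ v ∈ V₁.prod W₁, ∀ w ∈ V₁.prod W₁, ⁅v, w⁆ ∈ V₂.prod W₂)
    (h₁ : ∀ v ∈ V₁, ∀ w ∈ V₁, ⁅v, w⁆ ∈ V₂)
    (h₂ : ∀ v ∈ W₁, ∀ w ∈ W₁, ⁅v, w⁆ ∈ W₂)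
    (μ : Module.Dual ℝ ↥(V₂.prod W₂)) (μ₁ : Module.Dual ℝ V₂) (μ₂ : Module.Dual ℝ W₂)
    (hμ : ∀ x : ↥(V₂.prod W₂), μ x = μ₁ ⟨x.1.1, x.2.1⟩ + μ₂ ⟨x.1.2, x.2.2⟩) :
    formRank (kaplan (V₁.prod W₁) (V₂.prod W₂) h μ) =
      formRank (kaplan V₁ V₂ h₁ μ₁) + formRank (kaplan W₁ W₂ h₂ μ₂) := by
  have hker : Module.finrank ℝ (LinearMap.ker (kaplan (V₁.prod W₁) (V₂.prod W₂) h μ)) =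
      Module.finrank ℝ (LinearMap.ker (kaplan V₁ V₂ h₁ μ₁)) +
        Module.finrank ℝ (LinearMap.ker (kaplan W₁ W₂ h₂ μ₂)) := by
    rw [← LinearEquiv.finrank_map_eq (submoduleProdEquiv V₁ W₁),
      kaplan_prod_ker h h₁ h₂ μ μ₁ μ₂ hμ, finrank_submodule_prod]
  have le1 : Module.finrank ℝ (LinearMap.ker (kaplan V₁ V₂ h₁ μ₁)) ≤ Module.finrank ℝ V₁ :=
    Submodule.finrank_le _
  have le2 : Module.finrank ℝ (LinearMap.ker (kaplan W₁ W₂ h₂ μ₂)) ≤ Module.finrank ℝ W₁ :=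
    Submodule.finrank_le _
  simp only [formRank, hker, finrank_submodule_prod]
  omega

theorem exists_dual_ne_zero {M : Type*} [AddCommGroup M] [Module ℝ M] [FiniteDimensional ℝ M]
    {p : Submodule ℝ M} (hp : p ≠ ⊥) : ∃ μ : Module.Dual ℝ p, μ ≠ 0 := by
  obtain ⟨v, hv, hv0⟩ := Submodule.ne_bot_iff p |>.mp hp
  have : (⟨v, hv⟩ : p) ≠ 0 := by simpa [Submodule.mk_eq_zero] using hv0
  by_contra hcon
  push_neg at hcon
  exact this ((Module.forall_dual_apply_eq_zero_iff ℝ _).mp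
    (fun φ => by rw [hcon φ]; rfl))

end AuxKaplan

/-- For non-abelian stratified real Lie algebras `𝔤₁`, `𝔤₂` of step 2,
the Métivier order of the product (with the product stratification) is the minimum of the
Métivier orders of the factors. -/
theorem metivierOrder_prod {L₁ L₂ : Type*} [LieRing L₁] [LieAlgebra ℝ L₁]
    [FiniteDimensional ℝ L₁] [LieRing L₂] [LieAlgebra ℝ L₂] [FiniteDimensional ℝ L₂]
    (V : ℕ → Submodule ℝ L₁) (W : ℕ → Submodule ℝ L₂)
    (hV : IsStratification L₁ V 2) (hW : IsStratification L₂ W 2) :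
    metivierOrder ((V 1).prod (W 1)) ((V 2).prod (W 2)) (prod_lie_mem_sq hV hW) =
      min (metivierOrder (V 1) (V 2) (hV.lie_mem_sq le_rfl))
        (metivierOrder (W 1) (W 2) (hW.lie_mem_sq le_rfl)) := by
  classical
  have h := prod_lie_mem_sq hV hW
  have h₁ := hV.lie_mem_sq (le_refl 2)
  have h₂ := hW.lie_mem_sq (le_refl 2)
  set S : Set ℕ := {r : ℕ | ∃ μ : Module.Dual ℝ ↥((V 2).prod (W 2)), μ ≠ 0 ∧
    r = formRank (kaplan ((V 1).prod (W 1)) ((V 2).prod (W 2)) (prod_lie_mem_sq hV hW) μ)}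
    with hS
  set S₁ : Set ℕ := {r : ℕ | ∃ μ : Module.Dual ℝ (V 2), μ ≠ 0 ∧
    r = formRank (kaplan (V 1) (V 2) (hV.lie_mem_sq le_rfl) μ)} with hS₁
  set S₂ : Set ℕ := {r : ℕ | ∃ μ : Module.Dual ℝ (W 2), μ ≠ 0 ∧
    r = formRank (kaplan (W 1) (W 2) (hW.lie_mem_sq le_rfl) μ)} with hS₂
  have hne₁ : S₁.Nonempty := by
    obtain ⟨μ, hμ⟩ := exists_dual_ne_zero hV.last_ne_bot
    exact ⟨_, μ, hμ, rfl⟩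
  have hne₂ : S₂.Nonempty := by
    obtain ⟨μ, hμ⟩ := exists_dual_ne_zero hW.last_ne_bot
    exact ⟨_, μ, hμ, rfl⟩
  -- membership in S from a nonzero functional on one factor
  have memS₁ : ∀ μ₁ : Module.Dual ℝ (V 2), μ₁ ≠ 0 →
      formRank (kaplan (V 1) (V 2) (hV.lie_mem_sq le_rfl) μ₁) ∈ S := by
    intro μ₁ hμ₁
    refine ⟨μ₁.comp (prodProjFst (V 2) (W 2)), ?_, ?_⟩
    · intro hc
      obtain ⟨v, hv⟩ := DFunLike.ne_iff.mp hμ₁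
      apply hv
      have := congrArg (fun f : Module.Dual ℝ ↥((V 2).prod (W 2)) => f (prodInl (V 2) (W 2) v)) hc
      exact this
    · rw [kaplan_prod_formRank (prod_lie_mem_sq hV hW) (hV.lie_mem_sq le_rfl)
        (hW.lie_mem_sq le_rfl) _ μ₁ 0 (fun x => by simp [prodProjFst]),
        kaplan_zero, formRank_zero, add_zero]
  have memS₂ : ∀ μ₂ : Module.Dual ℝ (W 2), μ₂ ≠ 0 →
      formRank (kaplan (W 1) (W 2) (hW.lie_mem_sq le_rfl) μ₂) ∈ S := by
    intro μ₂ hμ₂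
    refine ⟨μ₂.comp (prodProjSnd (V 2) (W 2)), ?_, ?_⟩
    · intro hc
      obtain ⟨v, hv⟩ := DFunLike.ne_iff.mp hμ₂
      apply hv
      have := congrArg (fun f : Module.Dual ℝ ↥((V 2).prod (W 2)) => f (prodInr (V 2) (W 2) v)) hc
      exact this
    · rw [kaplan_prod_formRank (prod_lie_mem_sq hV hW) (hV.lie_mem_sq le_rfl)
        (hW.lie_mem_sq le_rfl) _ 0 μ₂ (fun x => by simp [prodProjSnd]),
        kaplan_zero, formRank_zero, zero_add]
  show sInf S = min (sInf S₁) (sInf S₂)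
  apply le_antisymm
  · rcases le_total (sInf S₁) (sInf S₂) with hle | hle
    · rw [min_eq_left hle]
      obtain ⟨μ₁, hμ₁, hr₁⟩ := Nat.sInf_mem hne₁
      rw [hr₁]
      exact Nat.sInf_le (memS₁ μ₁ hμ₁)
    · rw [min_eq_right hle]
      obtain ⟨μ₂, hμ₂, hr₂⟩ := Nat.sInf_mem hne₂
      rw [hr₂]
      exact Nat.sInf_le (memS₂ μ₂ hμ₂)
  · have hSne : S.Nonempty := by
      obtain ⟨r₀, μ₁, hμ₁, hr₀⟩ := hne₁
      exact ⟨_, memS₁ μ₁ hμ₁⟩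
    refine le_csInf hSne ?_
    rintro r ⟨μ, hμ0, rfl⟩
    set μ₁ := μ.comp (prodInl (V 2) (W 2)) with hμ₁def
    set μ₂ := μ.comp (prodInr (V 2) (W 2)) with hμ₂def
    have hdec : ∀ x : ↥((V 2).prod (W 2)), μ x = μ₁ ⟨x.1.1, x.2.1⟩ + μ₂ ⟨x.1.2, x.2.2⟩ :=
      fun x => prod_dual_decomp (V 2) (W 2) μ x
    rw [kaplan_prod_formRank (prod_lie_mem_sq hV hW) (hV.lie_mem_sq le_rfl)
      (hW.lie_mem_sq le_rfl) μ μ₁ μ₂ hdec]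
    by_cases hc₁ : μ₁ = 0
    · have hc₂ : μ₂ ≠ 0 := by
        intro hc₂
        apply hμ0
        ext x
        rw [hdec x, hc₁, hc₂]
        simp
      calc min (sInf S₁) (sInf S₂) ≤ sInf S₂ := min_le_right _ _
        _ ≤ formRank (kaplan (W 1) (W 2) (hW.lie_mem_sq le_rfl) μ₂) :=
            Nat.sInf_le ⟨μ₂, hc₂, rfl⟩
        _ ≤ _ := Nat.le_add_left _ _
    · calc min (sInf S₁) (sInf S₂) ≤ sInf S₁ := min_le_left _ _
        _ ≤ formRank (kaplan (V 1) (V 2) (hV.lie_mem_sq le_rfl) μ₁) :=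
            Nat.sInf_le ⟨μ₁, hc₁, rfl⟩
        _ ≤ _ := Nat.le_add_right _ _
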